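/- Let f : ℂ^n → ℂ and ν : ℂ^n → ℂ^n be analytic, and suppose m : ℂ^n → ℂ is analytic with Dm_x(ν(x)) = 0 for all x ∈ ℂ^n (m lies in the kernel of ν). Then for every integer j ≥ 0, the function N : ℂ × ℂ × ℂ^n → ℂ, N(u,v,x) = m(x)·v^j, lies in the kernel of the lifted field ν_u; that is, DN_{(u,v,x)}(ν_u(u,v,x)) = 0 for all (u,v,x) ∈ ℂ^{2+n}. Symmetrically, if Dm_x(μ(x)) = 0 for all x, then for every i ≥ 0 the function M(u,v,x) = m(x)·u^i satisfies DM_{(u,v,x)}(μ_v(u,v,x)) = 0 for all (u,v,x), where μ_v(u,v,x) = (0, Df_x(μ(x)), u·μ(x)). -/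

import Mathlib

/-- if `m₁` lies in the kernel of `ν` (i.e. `Dm₁_x (ν x) = 0` for all `x`),
then for every `j ≥ 0` the function `N (u,v,x) = m₁ x * v^j` lies in the kernel of the
lifted field `ν_u (u,v,x) = (Df_x(ν x), 0, v • ν x)`. Symmetrically, if `m₂` lies in the
kernel of `μ`, then for every `i ≥ 0` the function `M (u,v,x) = m₂ x * u^i` lies in the
kernel of `μ_v (u,v,x) = (0, Df_x(μ x), u • μ x)`. -/
theorem stmt_12 (n : ℕ) (f : (Fin n → ℂ) → ℂ) (hf : Differentiable ℂ f)
    (ν μ : (Fin n → ℂ) → (Fin n → ℂ)) (hν : Differentiable ℂ ν) (hμ : Differentiable ℂ μ)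
    (m₁ m₂ : (Fin n → ℂ) → ℂ) (hm₁ : Differentiable ℂ m₁) (hm₂ : Differentiable ℂ m₂)
    (hker₁ : ∀ x : Fin n → ℂ, fderiv ℂ m₁ x (ν x) = 0)
    (hker₂ : ∀ x : Fin n → ℂ, fderiv ℂ m₂ x (μ x) = 0) :
    (∀ (j : ℕ) (u v : ℂ) (x : Fin n → ℂ),
      fderiv ℂ (fun p : ℂ × ℂ × (Fin n → ℂ) => m₁ p.2.2 * p.2.1 ^ j) (u, v, x)
        (fderiv ℂ f x (ν x), 0, v • ν x) = 0) ∧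
    (∀ (i : ℕ) (u v : ℂ) (x : Fin n → ℂ),
      fderiv ℂ (fun p : ℂ × ℂ × (Fin n → ℂ) => m₂ p.2.2 * p.1 ^ i) (u, v, x)
        (0, fderiv ℂ f x (μ x), u • μ x) = 0) := by
  constructor
  · intro j u v x
    have hmc : HasFDerivAt (fun p : ℂ × ℂ × (Fin n → ℂ) => m₁ p.2.2)
        ((fderiv ℂ m₁ x).comp ((ContinuousLinearMap.snd ℂ ℂ (Fin n → ℂ)).comp
          (ContinuousLinearMap.snd ℂ ℂ (ℂ × (Fin n → ℂ))))) (u, v, x) :=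
      (hm₁ x).hasFDerivAt.comp _ (hasFDerivAt_snd.comp _ hasFDerivAt_snd)
    have hvc : HasFDerivAt (fun p : ℂ × ℂ × (Fin n → ℂ) => p.2.1)
        ((ContinuousLinearMap.fst ℂ ℂ (Fin n → ℂ)).comp
          (ContinuousLinearMap.snd ℂ ℂ (ℂ × (Fin n → ℂ)))) (u, v, x) :=
      hasFDerivAt_fst.comp _ hasFDerivAt_snd
    have hpow : HasFDerivAt (fun p : ℂ × ℂ × (Fin n → ℂ) => p.2.1 ^ j)
        ((((j : ℂ) * v ^ (j - 1)) : ℂ) • ((ContinuousLinearMap.fst ℂ ℂ (Fin n → ℂ)).comp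
          (ContinuousLinearMap.snd ℂ ℂ (ℂ × (Fin n → ℂ))))) (u, v, x) :=
      (hasDerivAt_pow j v).comp_hasFDerivAt _ hvc
    have hN := hmc.fun_mul hpow
    rw [hN.fderiv]
    simp only [ContinuousLinearMap.add_apply, ContinuousLinearMap.smul_apply,
      ContinuousLinearMap.comp_apply, ContinuousLinearMap.coe_fst',
      ContinuousLinearMap.coe_snd', map_smul, hker₁]
    simp
  · intro i u v x
    have hmc : HasFDerivAt (fun p : ℂ × ℂ × (Fin n → ℂ) => m₂ p.2.2)
        ((fderiv ℂ m₂ x).comp ((ContinuousLinearMap.snd ℂ ℂ (Fin n → ℂ)).comp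
          (ContinuousLinearMap.snd ℂ ℂ (ℂ × (Fin n → ℂ))))) (u, v, x) :=
      (hm₂ x).hasFDerivAt.comp _ (hasFDerivAt_snd.comp _ hasFDerivAt_snd)
    have hpow : HasFDerivAt (fun p : ℂ × ℂ × (Fin n → ℂ) => p.1 ^ i)
        ((((i : ℂ) * u ^ (i - 1)) : ℂ) • (ContinuousLinearMap.fst ℂ ℂ (ℂ × (Fin n → ℂ)))) (u, v, x) :=
      (hasDerivAt_pow i u).comp_hasFDerivAt _ hasFDerivAt_fst
    have hN := hmc.fun_mul hpow
    rw [hN.fderiv]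
    simp only [ContinuousLinearMap.add_apply, ContinuousLinearMap.smul_apply,
      ContinuousLinearMap.comp_apply, ContinuousLinearMap.coe_fst',
      ContinuousLinearMap.coe_snd', map_smul, hker₂]
    simp
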